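/- (Passty's ergodic lemma) Let H be a real Hilbert space, {x_k} a sequence in H, and B ⊆ H a nonempty set. Let {r_k} be a sequence of positive reals with ∑_{k=1}^{∞} r_k = +∞, and define the ergodic averages x̃_n = (1/σ_n) ∑_{k=1}^{n} r_k x_k, where σ_n = ∑_{k=1}^{n} r_k. Suppose that: (1) for every y ∈ B, the sequence {‖x_k − y‖} converges; (2) every weak cluster point of {x̃_n} belongs to B. Then {x̃_n} converges weakly to some point x̄ ∈ B. -/

import Mathlib

open Filter RealInnerProductSpace

/-- Weak convergence of a sequence in a real inner product space, characterized by
convergence of inner products against every vector. -/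
def WeaklyConvergesTo {H : Type*} [NormedAddCommGroup H] [InnerProductSpace ℝ H]
    (x : ℕ → H) (l : H) : Prop :=
  ∀ q : H, Tendsto (fun k => ⟪x k, q⟫) atTop (nhds ⟪l, q⟫)

lemma shift_sum {M : Type*} [AddCommMonoid M] (f : ℕ → M) (n : ℕ) :
    ∑ k ∈ Finset.Icc 1 n, f k = ∑ i ∈ Finset.range n, f (1 + i) := by
  rw [← Finset.Ico_add_one_right_eq_Icc, Finset.sum_Ico_eq_sum_range]
  simp

lemma wcesaro {r a : ℕ → ℝ} (hr : ∀ k, 0 ≤ r k)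
    (hσ : Tendsto (fun n => ∑ i ∈ Finset.range n, r i) atTop atTop) {c : ℝ}
    (ha : Tendsto a atTop (nhds c)) :
    Tendsto (fun n => (∑ i ∈ Finset.range n, r i)⁻¹ * ∑ i ∈ Finset.range n, r i * a i)
      atTop (nhds c) := by
  have hf : (fun i => r i * (a i - c)) =o[atTop] r := by
    have h1 : (fun i => a i - c) =o[atTop] (fun _ => (1:ℝ)) :=
      (Asymptotics.isLittleO_one_iff ℝ).2 (tendsto_sub_nhds_zero_iff.2 ha)
    simpa using (Asymptotics.isBigO_refl r atTop).mul_isLittleO h1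
  have hdiv := (hf.sum_range hr hσ).tendsto_div_nhds_zero
  have hev : (fun n => (∑ i ∈ Finset.range n, r i)⁻¹ * ∑ i ∈ Finset.range n, r i * a i)
      =ᶠ[atTop] fun n =>
        (∑ i ∈ Finset.range n, r i * (a i - c)) / (∑ i ∈ Finset.range n, r i) + c := by
    filter_upwards [hσ.eventually_gt_atTop 0] with n hn
    have hne : (∑ i ∈ Finset.range n, r i) ≠ 0 := ne_of_gt hn
    have : ∑ i ∈ Finset.range n, r i * a i
        = (∑ i ∈ Finset.range n, r i * (a i - c)) + (∑ i ∈ Finset.range n, r i) * c := by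
      rw [Finset.sum_mul, ← Finset.sum_add_distrib]
      congr 1; ext i; ring
    rw [this, mul_add, inv_mul_cancel_left₀ hne, div_eq_inv_mul]
  rw [tendsto_congr' hev]
  simpa using hdiv.add_const c


lemma exists_weak_subseq {H : Type*} [NormedAddCommGroup H] [InnerProductSpace ℝ H]
    [CompleteSpace H] (a : ℕ → H) (M : ℝ) (hM : ∀ n, ‖a n‖ ≤ M) :
    ∃ z : H, ∃ φ : ℕ → ℕ, StrictMono φ ∧
      ∀ q : H, Tendsto (fun n => ⟪a (φ n), q⟫) atTop (nhds ⟪z, q⟫) := by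
  classical
  set K : Submodule ℝ H := (Submodule.span ℝ (Set.range a)).topologicalClosure with hK
  have haK : ∀ n, a n ∈ K := fun n =>
    (Submodule.span ℝ (Set.range a)).le_topologicalClosure
      (Submodule.subset_span (Set.mem_range_self n))
  haveI : CompleteSpace K :=
    (Submodule.isClosed_topologicalClosure (Submodule.span ℝ (Set.range a))).completeSpace_coe
  -- separability of K
  have hsep : TopologicalSpace.IsSeparable (K : Set H) := by
    rw [hK, Submodule.topologicalClosure_coe]
    exact ((Set.countable_range a).isSeparable.span).closure
  obtain ⟨c, hc_count, hc_sub⟩ := hsep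
  have hcne : c.Nonempty := by
    have h0 : (0 : H) ∈ closure c := hc_sub K.zero_mem
    exact closure_nonempty_iff.1 ⟨0, h0⟩
  obtain ⟨q, hq⟩ := hc_count.exists_eq_range hcne
  have hdense : ∀ v ∈ (K : Set H), ∀ ε > (0:ℝ), ∃ j : ℕ, ‖v - q j‖ < ε := by
    intro v hv ε hε
    have := Metric.mem_closure_iff.1 (hc_sub hv) ε hε
    obtain ⟨b, hb, hd⟩ := this
    rw [hq] at hb
    obtain ⟨j, rfl⟩ := hb
    exact ⟨j, by rwa [← dist_eq_norm]⟩
  -- diagonal extraction via compactness of a product of intervals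
  set s : Set (ℕ → ℝ) := Set.univ.pi fun j => Set.Icc (-(M * ‖q j‖)) (M * ‖q j‖) with hs
  have hscomp : IsCompact s := isCompact_univ_pi fun j => isCompact_Icc
  have hmem : ∀ n, (fun j => ⟪a n, q j⟫) ∈ s := by
    intro n
    rw [hs, Set.mem_univ_pi]
    intro j
    have := abs_real_inner_le_norm (a n) (q j)
    have hb : |⟪a n, q j⟫| ≤ M * ‖q j‖ :=
      this.trans (mul_le_mul_of_nonneg_right (hM n) (norm_nonneg _))
    exact abs_le.1 hb
  obtain ⟨ℓ, -, φ, hφ, hconv⟩ := hscomp.tendsto_subseq hmem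
  have hcoord : ∀ j, Tendsto (fun n => ⟪a (φ n), q j⟫) atTop (nhds (ℓ j)) := by
    intro j
    exact (tendsto_pi_nhds.1 hconv) j
  have hM0 : 0 ≤ M := (norm_nonneg _).trans (hM 0)
  -- every inner product sequence along φ is Cauchy
  have hcauchy : ∀ v : H, ∃ L : ℝ, Tendsto (fun n => ⟪a (φ n), v⟫) atTop (nhds L) := by
    intro v
    obtain ⟨y, hyK, w, hw, rfl⟩ := K.exists_add_mem_mem_orthogonal v
    have hzero : ∀ n, ⟪a n, w⟫ = 0 := fun n =>
      Submodule.inner_right_of_mem_orthogonal (haK n) hw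
    have heq : ∀ n, ⟪a n, y + w⟫ = ⟪a n, y⟫ := by
      intro n; rw [inner_add_right, hzero, add_zero]
    have hC : CauchySeq (fun n => ⟪a (φ n), y⟫) := by
      rw [Metric.cauchySeq_iff]
      intro ε hε
      obtain ⟨j, hj⟩ := hdense y hyK (ε / (4 * (M + 1))) (by positivity)
      obtain ⟨N, hN⟩ := (Metric.cauchySeq_iff.1 (hcoord j).cauchySeq) (ε / 2) (by positivity)
      refine ⟨N, fun m hm n hn => ?_⟩
      have key : ∀ p, ⟪a (φ p), y⟫ = ⟪a (φ p), q j⟫ + ⟪a (φ p), y - q j⟫ := by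
        intro p
        rw [← inner_add_right]
        congr 1
        abel
      have hsmall : ∀ p, |⟪a (φ p), y - q j⟫| ≤ M * (ε / (4 * (M + 1))) := by
        intro p
        refine (abs_real_inner_le_norm _ _).trans ?_
        exact mul_le_mul (hM _) hj.le (norm_nonneg _) hM0
      have hMe : M * (ε / (4 * (M + 1))) ≤ ε / 4 := by
        rw [mul_div_assoc', div_le_div_iff₀ (by positivity) (by norm_num)]
        nlinarith [hε.le]
      rw [Real.dist_eq]
      have h1 := hN m hm n hn
      rw [Real.dist_eq] at h1
      have h2 := hsmall m
      have h3 := hsmall n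
      have e1 := key m
      have e2 := key n
      calc |⟪a (φ m), y⟫ - ⟪a (φ n), y⟫|
          = |(⟪a (φ m), q j⟫ - ⟪a (φ n), q j⟫) +
            (⟪a (φ m), y - q j⟫ - ⟪a (φ n), y - q j⟫)| := by rw [e1, e2]; ring_nf
        _ ≤ |⟪a (φ m), q j⟫ - ⟪a (φ n), q j⟫| +
            (|⟪a (φ m), y - q j⟫| + |⟪a (φ n), y - q j⟫|) := by
              refine (abs_add_le _ _).trans ?_
              gcongr
              exact abs_sub _ _
        _ < ε := by linarith
    obtain ⟨L, hL⟩ := cauchySeq_tendsto_of_complete hC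
    exact ⟨L, by simpa only [heq] using hL⟩
  -- build the limiting functional
  choose F0 hF using hcauchy
  have hFadd : ∀ u v : H, F0 (u + v) = F0 u + F0 v := by
    intro u v
    refine tendsto_nhds_unique (hF (u + v)) ?_
    have := (hF u).add (hF v)
    simpa only [inner_add_right] using this
  have hFsmul : ∀ (t : ℝ) (v : H), F0 (t • v) = t * F0 v := by
    intro t v
    refine tendsto_nhds_unique (hF (t • v)) ?_
    have := (hF v).const_mul t
    simpa only [real_inner_smul_right] using this
  have hFbound : ∀ v : H, ‖F0 v‖ ≤ M * ‖v‖ := by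
    intro v
    rw [Real.norm_eq_abs]
    refine le_of_tendsto' (hF v).abs fun n => ?_
    exact (abs_real_inner_le_norm _ _).trans
      (mul_le_mul_of_nonneg_right (hM _) (norm_nonneg _))
  let F : H →L[ℝ] ℝ :=
    LinearMap.mkContinuous
      { toFun := F0, map_add' := hFadd, map_smul' := hFsmul } M hFbound
  refine ⟨(InnerProductSpace.toDual ℝ H).symm F, φ, hφ, fun v => ?_⟩
  have : ⟪(InnerProductSpace.toDual ℝ H).symm F, v⟫ = F v :=
    InnerProductSpace.toDual_symm_apply
  rw [this]
  exact hF v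


set_option maxHeartbeats 1000000 in
/-- Passty's ergodic lemma: let `{x_k}` be a sequence in a real Hilbert
space `H`, `B ⊆ H` nonempty, `{r_k}` positive with `∑ r_k = +∞`, and let
`x̃_n = σ_n⁻¹ ∑_{k=1}^n r_k x_k` with `σ_n = ∑_{k=1}^n r_k`. If (1) for every `y ∈ B` the
sequence `{‖x_k - y‖}` converges, and (2) every weak cluster point of `{x̃_n}` belongs to
`B`, then `{x̃_n}` converges weakly to some `x̄ ∈ B`. -/
theorem passty_ergodic_lemma
    {H : Type*} [NormedAddCommGroup H] [InnerProductSpace ℝ H] [CompleteSpace H]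
    (x : ℕ → H) (B : Set H) (hBne : B.Nonempty)
    (r : ℕ → ℝ) (hr : ∀ k, 0 < r k)
    (hrdiv : Tendsto (fun n : ℕ => ∑ k ∈ Finset.Icc 1 n, r k) atTop atTop)
    (xt : ℕ → H)
    (hxt : ∀ n : ℕ, xt n = (∑ k ∈ Finset.Icc 1 n, r k)⁻¹ • ∑ k ∈ Finset.Icc 1 n, r k • x k)
    (hdist : ∀ y ∈ B, ∃ L : ℝ, Tendsto (fun k => ‖x k - y‖) atTop (nhds L))
    (hcluster : ∀ z : H, (∃ φ : ℕ → ℕ, StrictMono φ ∧ WeaklyConvergesTo (xt ∘ φ) z) → z ∈ B) :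
    ∃ xbar ∈ B, WeaklyConvergesTo xt xbar := by
  classical
  obtain ⟨y0, hy0⟩ := hBne
  obtain ⟨L0, hL0⟩ := hdist y0 hy0
  obtain ⟨C0, hC0⟩ := hL0.bddAbove_range
  have hC0' : ∀ k, ‖x k - y0‖ ≤ C0 := fun k => hC0 (Set.mem_range_self k)
  set C := C0 + ‖y0‖ with hC
  have hxC : ∀ k, ‖x k‖ ≤ C := by
    intro k
    have h := norm_add_le (x k - y0) y0
    rw [sub_add_cancel] at h
    exact h.trans (add_le_add_left (hC0' k) _)
  have hCnn : 0 ≤ C := (norm_nonneg (x 0)).trans (hxC 0)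
  have hxtC : ∀ n, ‖xt n‖ ≤ C := by
    intro n
    rw [hxt n]
    rcases Nat.eq_zero_or_pos n with h0 | hpos
    · subst h0
      rw [Finset.Icc_eq_empty (by norm_num)]
      simpa using hCnn
    · have hσpos : 0 < ∑ k ∈ Finset.Icc 1 n, r k :=
        Finset.sum_pos (fun k _ => hr k) ⟨1, Finset.mem_Icc.2 ⟨le_refl 1, hpos⟩⟩
      rw [norm_smul, Real.norm_eq_abs, abs_of_nonneg (inv_nonneg.2 hσpos.le)]
      have h1 : ‖∑ k ∈ Finset.Icc 1 n, r k • x k‖ ≤ (∑ k ∈ Finset.Icc 1 n, r k) * C := by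
        refine (norm_sum_le _ _).trans ?_
        rw [Finset.sum_mul]
        refine Finset.sum_le_sum fun k _ => ?_
        rw [norm_smul, Real.norm_eq_abs, abs_of_nonneg (hr k).le]
        exact mul_le_mul_of_nonneg_left (hxC k) (hr k).le
      calc (∑ k ∈ Finset.Icc 1 n, r k)⁻¹ * ‖∑ k ∈ Finset.Icc 1 n, r k • x k‖
          ≤ (∑ k ∈ Finset.Icc 1 n, r k)⁻¹ * ((∑ k ∈ Finset.Icc 1 n, r k) * C) := by
            exact mul_le_mul_of_nonneg_left h1 (inv_nonneg.2 hσpos.le)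
        _ = C := inv_mul_cancel_left₀ (ne_of_gt hσpos) C
  -- transfer: convergence along x implies convergence of ergodic averages
  have hshift : Tendsto (fun i : ℕ => 1 + i) atTop atTop := by
    simpa [Nat.add_comm] using tendsto_add_atTop_nat 1
  have hσ' : Tendsto (fun n => ∑ i ∈ Finset.range n, r (1 + i)) atTop atTop := by
    have := hrdiv
    rw [tendsto_congr fun n => shift_sum r n] at this
    exact this
  have htrans : ∀ (v : H) (c : ℝ), Tendsto (fun k => ⟪x k, v⟫) atTop (nhds c) →
      Tendsto (fun n => ⟪xt n, v⟫) atTop (nhds c) := by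
    intro v c hc
    have heq : ∀ n, ⟪xt n, v⟫ = (∑ i ∈ Finset.range n, r (1 + i))⁻¹ *
        ∑ i ∈ Finset.range n, r (1 + i) * ⟪x (1 + i), v⟫ := by
      intro n
      rw [hxt n, real_inner_smul_left, sum_inner]
      have e1 : ∀ k ∈ Finset.Icc 1 n, ⟪r k • x k, v⟫ = r k * ⟪x k, v⟫ := fun k _ =>
        real_inner_smul_left _ _ _
      rw [Finset.sum_congr rfl e1, shift_sum r n, shift_sum (fun k => r k * ⟪x k, v⟫) n]
    rw [tendsto_congr heq]
    exact wcesaro (fun i => (hr _).le) hσ' (hc.comp hshift)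
  -- inner products against differences of points of B converge
  have hkey : ∀ y1 ∈ B, ∀ y2 ∈ B, ∃ c : ℝ,
      Tendsto (fun n => ⟪xt n, y1 - y2⟫) atTop (nhds c) := by
    intro y1 hy1 y2 hy2
    obtain ⟨L1, hL1⟩ := hdist y1 hy1
    obtain ⟨L2, hL2⟩ := hdist y2 hy2
    refine ⟨(‖y1‖^2 - ‖y2‖^2 - (L1^2 - L2^2)) / 2, htrans _ _ ?_⟩
    have heq : ∀ k, ⟪x k, y1 - y2⟫ =
        (‖y1‖^2 - ‖y2‖^2 - (‖x k - y1‖^2 - ‖x k - y2‖^2)) / 2 := by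
      intro k
      have e1 := norm_sub_sq_real (x k) y1
      have e2 := norm_sub_sq_real (x k) y2
      have e3 : ⟪x k, y1 - y2⟫ = ⟪x k, y1⟫ - ⟪x k, y2⟫ := inner_sub_right _ _ _
      rw [e3]
      linarith
    rw [tendsto_congr heq]
    exact (tendsto_const_nhds.sub ((hL1.pow 2).sub (hL2.pow 2))).div_const 2
  -- initial weak cluster point
  obtain ⟨z0, φ0, hφ0, hwz0⟩ := exists_weak_subseq xt C hxtC
  have hz0B : z0 ∈ B := hcluster z0 ⟨φ0, hφ0, fun q => hwz0 q⟩
  -- uniqueness of weak cluster points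
  have huniq : ∀ z' ∈ B, ∀ ρ : ℕ → ℕ, StrictMono ρ →
      (∀ q : H, Tendsto (fun n => ⟪xt (ρ n), q⟫) atTop (nhds ⟪z', q⟫)) → z' = z0 := by
    intro z' hz' ρ hρ hw
    obtain ⟨c, hc⟩ := hkey z0 hz0B z' hz'
    have h1 : Tendsto (fun n => ⟪xt (φ0 n), z0 - z'⟫) atTop (nhds c) :=
      hc.comp hφ0.tendsto_atTop
    have h2 : Tendsto (fun n => ⟪xt (ρ n), z0 - z'⟫) atTop (nhds c) :=
      hc.comp hρ.tendsto_atTop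
    have e1 : c = ⟪z0, z0 - z'⟫ := tendsto_nhds_unique h1 (hwz0 (z0 - z'))
    have e2 : c = ⟪z', z0 - z'⟫ := tendsto_nhds_unique h2 (hw (z0 - z'))
    have e3 : ⟪z0 - z', z0 - z'⟫ = 0 := by
      rw [inner_sub_left]
      linarith
    have e4 : z0 - z' = 0 := inner_self_eq_zero.1 e3
    have := sub_eq_zero.1 e4
    exact this.symm
  refine ⟨z0, hz0B, fun q => ?_⟩
  by_contra hcon
  rw [Metric.tendsto_atTop] at hcon
  push_neg at hcon
  obtain ⟨ε, hε, hfreq⟩ := hcon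
  obtain ⟨ψ, hψ, hψP⟩ :=
    Filter.extraction_of_frequently_atTop (Filter.frequently_atTop.2 hfreq)
  obtain ⟨z', φ', hφ', hw'⟩ := exists_weak_subseq (xt ∘ ψ) C (fun n => hxtC _)
  have hz'eq : z' = z0 := by
    refine huniq z' (hcluster z' ⟨ψ ∘ φ', hψ.comp hφ', fun q => hw' q⟩)
      (ψ ∘ φ') (hψ.comp hφ') (fun q => hw' q)
  have hconv := hw' q
  rw [hz'eq] at hconv
  obtain ⟨N, hN⟩ := Metric.tendsto_atTop.1 hconv ε hε
  have h1 := hN N le_rfl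
  have h2 := hψP (φ' N)
  exact absurd h1 (not_lt.2 h2)
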